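/- The sparsemax loss L(z; k) := −z_k + (1/2)∑_{j ∈ S(z)}(z_j² − τ(z)²) + 1/2 is a convex function of z ∈ ℝ^K. -/

import Mathlib

open Finset

lemma ptwise16 (z q t : ℝ) (hq : 0 ≤ q) :
    q*z - q^2/2 ≤ (max 0 (z - t))*z - (max 0 (z - t))^2/2 + t*(q - max 0 (z - t)) := by
  rcases le_or_gt z t with h | h
  · rw [max_eq_left (by linarith)]
    nlinarith [sq_nonneg q, mul_nonneg hq (sub_nonneg.2 h)]
  · rw [max_eq_right (by linarith)]
    nlinarith [sq_nonneg (q - (z - t))]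

lemma optB16 {K : ℕ} (z q : Fin K → ℝ) (t : ℝ) (hq0 : ∀ j, 0 ≤ q j)
    (hq1 : ∑ j, q j = 1) (hp1 : ∑ j, max 0 (z j - t) = 1) :
    ∑ j, (q j * z j - q j^2/2)
      ≤ ∑ j, ((max 0 (z j - t)) * z j - (max 0 (z j - t))^2/2) := by
  have h := Finset.sum_le_sum (fun j (_ : j ∈ Finset.univ) => ptwise16 (z j) (q j) t (hq0 j))
  have h2 : ∑ j, ((max 0 (z j - t)) * z j - (max 0 (z j - t))^2/2 + t*(q j - max 0 (z j - t)))
      = ∑ j, ((max 0 (z j - t)) * z j - (max 0 (z j - t))^2/2)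
        + t * ((∑ j, q j) - ∑ j, max 0 (z j - t)) := by
    rw [Finset.sum_add_distrib, ← Finset.mul_sum, Finset.sum_sub_distrib, Finset.sum_sub_distrib]
  rw [h2, hq1, hp1] at h
  simpa using h

lemma lemA16 {K : ℕ} (z : Fin K → ℝ) (t : ℝ) :
    (1/2) * ∑ j ∈ Finset.univ.filter (fun j => t < z j), (z j ^ 2 - t ^ 2)
      = ∑ j, ((max 0 (z j - t)) * z j - (max 0 (z j - t))^2/2) := by
  rw [Finset.mul_sum, Finset.sum_filter]
  refine Finset.sum_congr rfl fun j _ => ?_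
  rcases le_or_gt (z j) t with h | h
  · rw [if_neg (not_lt.2 h), max_eq_left (by linarith)]; ring
  · rw [if_pos h, max_eq_right (by linarith)]; ring

theorem stmt16 {K : ℕ} (τ : (Fin K → ℝ) → ℝ)
    (hτ : ∀ w : Fin K → ℝ, (∑ j, max 0 (w j - τ w)) = 1) (k : Fin K) :
    ConvexOn ℝ Set.univ (fun z : Fin K → ℝ =>
      -z k + (1 / 2) * ∑ j ∈ Finset.univ.filter (fun j => τ z < z j),
        (z j ^ 2 - τ z ^ 2) + 1 / 2) := by
  refine ⟨convex_univ, fun x _ y _ a b ha hb hab => ?_⟩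
  set z : Fin K → ℝ := a • x + b • y with hz
  have hzj : ∀ j, z j = a * x j + b * y j := fun j => rfl
  set q : Fin K → ℝ := fun j => max 0 (z j - τ z) with hqdef
  have hq0 : ∀ j, 0 ≤ q j := fun j => le_max_left _ _
  have hq1 : ∑ j, q j = 1 := hτ z
  have split : ∑ j, (q j * z j - q j^2/2)
      = a * (∑ j, (q j * x j - q j^2/2)) + b * (∑ j, (q j * y j - q j^2/2)) := by
    rw [Finset.mul_sum, Finset.mul_sum, ← Finset.sum_add_distrib]
    refine Finset.sum_congr rfl fun j _ => ?_
    rw [hzj]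
    linear_combination (q j ^ 2 / 2) * hab
  have hx := optB16 x q (τ x) hq0 hq1 (hτ x)
  have hy := optB16 y q (τ y) hq0 hq1 (hτ y)
  have key : (1/2) * ∑ j ∈ Finset.univ.filter (fun j => τ z < z j), (z j ^2 - τ z ^2)
      ≤ a * ((1/2) * ∑ j ∈ Finset.univ.filter (fun j => τ x < x j), (x j^2 - τ x^2))
      + b * ((1/2) * ∑ j ∈ Finset.univ.filter (fun j => τ y < y j), (y j^2 - τ y^2)) := by
    rw [lemA16 z (τ z), lemA16 x (τ x), lemA16 y (τ y), split]
    have := mul_le_mul_of_nonneg_left hx ha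
    have := mul_le_mul_of_nonneg_left hy hb
    linarith
  simp only [smul_eq_mul, Pi.add_apply, Pi.smul_apply]
  have hzk : z k = a * x k + b * y k := hzj k
  nlinarith [key]
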